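/- arXiv:2510.16749 — 4 statements merged into one kernel-verified Lean document; each statement's English description precedes it below -/
import Mathlib

section
/- Let k, K be positive integers with K = c·k + d where 0 ≤ d < k (Euclidean division). Consider the map ψ : [k·K] → [k·K] defined as follows: write x = a·K + b with 0 ≤ b < K, and b = e·k + f with 0 ≤ f < k; set ψ(x) = (a·c + e)·k + f if e < c, and ψ(x) = c·k·k + a·d + f if e = c (here a ranges in [k]). Then ψ is a bijection of [k·K]. -/
/-- The block-rearrangement map on `[k·K]`, where `K = c·k + d`, `0 ≤ d < k`:
write `x = a·K + b`, `b = e·k + f`; send `x` to `(a·c + e)·k + f` if `e < c`,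
and to `c·k² + a·d + f` if `e = c`. -/
def blockPsi (k c d : ℕ) (x : ℕ) : ℕ :=
  let K := c * k + d
  let a := x / K
  let b := x % K
  let e := b / k
  let f := b % k
  if e < c then (a * c + e) * k + f else c * k * k + a * d + f

private lemma split_eq {m n p q r : ℕ} (hn : n < r) (hq : q < r)
    (h : m * r + n = p * r + q) : m = p ∧ n = q := by
  rcases lt_trichotomy m p with hlt | heq | hgt
  · have h2 : (m + 1) * r ≤ p * r := Nat.mul_le_mul_right r hlt
    rw [add_one_mul] at h2; omega
  · subst heq; omega
  · have h2 : (p + 1) * r ≤ m * r := Nat.mul_le_mul_right r hgt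
    rw [add_one_mul] at h2; omega

private lemma decomp (k c d x : ℕ) (hk : 0 < k) (hd : d < k)
    (hK : 0 < c * k + d) (hx : x < k * (c * k + d)) :
    ∃ a e f, a < k ∧ e ≤ c ∧ f < k ∧ (e = c → f < d) ∧
      x = a * (c * k + d) + (e * k + f) ∧
      blockPsi k c d x = if e < c then (a * c + e) * k + f else c * k * k + a * d + f := by
  refine ⟨x / (c * k + d), x % (c * k + d) / k, x % (c * k + d) % k, ?_, ?_, ?_, ?_, ?_, rfl⟩
  · exact Nat.div_lt_iff_lt_mul hK |>.mpr (by omega)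
  · have hb : x % (c * k + d) < c * k + d := Nat.mod_lt _ hK
    have : x % (c * k + d) < (c + 1) * k := by rw [add_one_mul]; omega
    exact Nat.lt_succ_iff.mp (Nat.div_lt_iff_lt_mul hk |>.mpr this)
  · exact Nat.mod_lt _ hk
  · intro hec
    have hb : x % (c * k + d) < c * k + d := Nat.mod_lt _ hK
    have h2 : x % (c * k + d) / k * k + x % (c * k + d) % k = x % (c * k + d) :=
      Nat.div_add_mod' _ _
    rw [hec] at h2; omega
  · have h1 : x / (c * k + d) * (c * k + d) + x % (c * k + d) = x := Nat.div_add_mod' _ _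
    have h2 : x % (c * k + d) / k * k + x % (c * k + d) % k = x % (c * k + d) :=
      Nat.div_add_mod' _ _
    omega

private lemma branch1_lt {k c a e f : ℕ} (ha : a < k) (he : e < c) (hf : f < k) :
    (a * c + e) * k + f < c * k * k := by
  have h1 : a * c + e + 1 ≤ k * c := by
    calc a * c + e + 1 ≤ a * c + c := by omega
      _ = (a + 1) * c := by ring
      _ ≤ k * c := Nat.mul_le_mul_right c ha
  calc (a * c + e) * k + f < (a * c + e + 1) * k := by rw [add_one_mul]; omega
    _ ≤ k * c * k := Nat.mul_le_mul_right k h1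
    _ = c * k * k := by ring

/-- The block-rearrangement map is a bijection of `[k·K]`. -/
theorem stmt_4 (k K c d : ℕ) (hk : 0 < k) (hK : 0 < K)
    (hKeq : K = c * k + d) (hd : d < k) :
    Set.BijOn (blockPsi k c d) (Set.Iio (k * K)) (Set.Iio (k * K)) := by
  subst hKeq
  have hmaps : Set.MapsTo (blockPsi k c d) (Set.Iio (k * (c * k + d)))
      (Set.Iio (k * (c * k + d))) := by
    intro x hx
    simp only [Set.mem_Iio] at *
    obtain ⟨a, e, f, ha, he, hf, hef, hxeq, hpsi⟩ := decomp k c d x hk hd hK hx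
    rw [hpsi]
    have hkK : k * (c * k + d) = c * k * k + k * d := by ring
    split_ifs with h
    · have := branch1_lt ha h hf
      have : c * k * k ≤ k * (c * k + d) := by nlinarith
      omega
    · have hec : e = c := le_antisymm he (not_lt.mp h)
      have hfd := hef hec
      have h1 : a * d + f < k * d := by
        calc a * d + f < (a + 1) * d := by rw [add_one_mul]; omega
          _ ≤ k * d := Nat.mul_le_mul_right d ha
      omega
  have hinj : Set.InjOn (blockPsi k c d) (Set.Iio (k * (c * k + d))) := by
    intro x hx y hy h
    simp only [Set.mem_Iio] at hx hy
    obtain ⟨a1, e1, f1, ha1, he1, hf1, hef1, hxeq, hpsi1⟩ := decomp k c d x hk hd hK hx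
    obtain ⟨a2, e2, f2, ha2, he2, hf2, hef2, hyeq, hpsi2⟩ := decomp k c d y hk hd hK hy
    rw [hpsi1, hpsi2] at h
    split_ifs at h with h1 h2 h2
    · obtain ⟨hA, hF⟩ := split_eq hf1 hf2 h
      obtain ⟨hA', hE⟩ := split_eq h1 h2 hA
      subst hA'; subst hE; subst hF; omega
    · exfalso
      have := branch1_lt ha1 h1 hf1
      omega
    · exfalso
      have := branch1_lt ha2 h2 hf2
      omega
    · have hec1 : e1 = c := le_antisymm he1 (not_lt.mp h1)
      have hec2 : e2 = c := le_antisymm he2 (not_lt.mp h2)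
      have hfd1 := hef1 hec1
      have hfd2 := hef2 hec2
      have h' : a1 * d + f1 = a2 * d + f2 := by omega
      obtain ⟨hA, hF⟩ := split_eq hfd1 hfd2 h'
      subst hA; subst hF; subst hec1; subst hec2; omega
  exact ((Set.finite_Iio _).injOn_iff_bijOn_of_mapsTo hmaps).mp hinj
end

section
/- Let ψ : [kK] → [kK] be the block-rearrangement bijection with K = ck + d, 0 ≤ d < k, and let λ_ψ(x) = ψ((x+1) mod kK) − ψ(x) be its generating cocycle. Then the set E of x ∈ [kK] for which |λ_ψ(x)| > 1 has cardinality at most 2k. -/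
lemma psi_succ (k c d : ℕ) (hk : 0 < k) (hd : d < k) (x : ℕ)
    (h1 : x % (c*k+d) + 1 ≠ c*k) (h2 : x % (c*k+d) + 1 < c*k+d) :
    blockPsi k c d (x+1) = blockPsi k c d x + 1 := by
  have hKpos : 0 < c*k+d := by omega
  have hxe := Nat.div_add_mod x (c*k+d)
  have hdiv : (x+1) / (c*k+d) = x / (c*k+d) := by
    rw [show x + 1 = (x % (c*k+d) + 1) + (c*k+d) * (x/(c*k+d)) by omega,
        Nat.add_mul_div_left _ _ hKpos, Nat.div_eq_of_lt h2]
    omega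
  have hmod : (x+1) % (c*k+d) = x % (c*k+d) + 1 := by
    rw [show x + 1 = (x % (c*k+d) + 1) + (c*k+d) * (x/(c*k+d)) by omega,
        Nat.add_mul_mod_self_left, Nat.mod_eq_of_lt h2]
  have hbe := Nat.div_add_mod (x % (c*k+d)) k
  have hf : x % (c*k+d) % k < k := Nat.mod_lt _ hk
  by_cases hfk : x % (c*k+d) % k + 1 < k
  · have hdiv2 : (x % (c*k+d) + 1) / k = x % (c*k+d) / k := by
      rw [show x % (c*k+d) + 1 = (x % (c*k+d) % k + 1) + k * (x % (c*k+d) / k) by omega,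
          Nat.add_mul_div_left _ _ hk, Nat.div_eq_of_lt hfk]
      omega
    have hmod2 : (x % (c*k+d) + 1) % k = x % (c*k+d) % k + 1 := by
      rw [show x % (c*k+d) + 1 = (x % (c*k+d) % k + 1) + k * (x % (c*k+d) / k) by omega,
          Nat.add_mul_mod_self_left, Nat.mod_eq_of_lt hfk]
    simp only [blockPsi, hdiv, hmod, hdiv2, hmod2]
    split_ifs <;> omega
  · have hfe : x % (c*k+d) % k + 1 = k := by omega
    have hmul : (x % (c*k+d) / k + 1) * k = k * (x % (c*k+d) / k) + k := by ring
    have hb1 : x % (c*k+d) + 1 = (x % (c*k+d) / k + 1) * k := by omega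
    have hdiv2 : (x % (c*k+d) + 1) / k = x % (c*k+d) / k + 1 := by
      rw [hb1, Nat.mul_div_cancel _ hk]
    have hmod2 : (x % (c*k+d) + 1) % k = 0 := by
      rw [hb1, Nat.mul_mod_left]
    have hck1 : (c+1) * k = c*k + k := by ring
    have hlt : (x % (c*k+d) / k + 1) * k < (c+1) * k := by omega
    have hec : x % (c*k+d) / k + 1 < c + 1 :=
      lt_of_mul_lt_mul_right hlt (Nat.zero_le k)
    have hne : x % (c*k+d) / k + 1 ≠ c := by
      intro h
      apply h1
      rw [hb1, h]
    have helt : x % (c*k+d) / k + 1 < c := by omega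
    simp only [blockPsi, hdiv, hmod, hdiv2, hmod2]
    rw [if_pos helt, if_pos (by omega : x % (c*k+d) / k < c)]
    have : (x/(c*k+d)*c + (x % (c*k+d) / k + 1)) * k
        = (x/(c*k+d)*c + x % (c*k+d) / k) * k + k := by ring
    omega

lemma card_mod_le (k K v : ℕ) (hK : 0 < K) :
    ((Finset.range (k*K)).filter (fun x => x % K = v)).card ≤ k := by
  have h : ((Finset.range (k*K)).filter (fun x => x % K = v)).card
      ≤ (Finset.range k).card := by
    apply Finset.card_le_card_of_injOn (fun x => x / K)
    · intro x hx
      simp only [Finset.coe_filter, Set.mem_setOf_eq, Finset.mem_filter, Finset.mem_range, Finset.coe_range, Set.mem_Iio] at hx ⊢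
      exact Nat.div_lt_of_lt_mul (by rw [mul_comm]; exact hx.1)
    · intro x hx y hy hxy
      simp only [Finset.coe_filter, Set.mem_setOf_eq, Finset.mem_range] at hx hy
      have h1 := Nat.div_add_mod x K
      have h2 := Nat.div_add_mod y K
      simp only at hxy
      calc x = K * (x / K) + x % K := h1.symm
        _ = K * (y / K) + y % K := by rw [hxy, hx.2, hy.2]
        _ = y := h2
  simpa using h

/-- The set of points where the generating cocycle of the block-rearrangement
bijection has absolute value greater than `1` has cardinality at most `2k`. -/
theorem stmt_8 (k K c d : ℕ) (hk : 0 < k) (hK : 0 < K)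
    (hKeq : K = c * k + d) (hd : d < k) :
    ((Finset.range (k * K)).filter (fun x =>
        1 < ((blockPsi k c d ((x + 1) % (k * K)) : ℤ)
              - (blockPsi k c d x : ℤ)).natAbs)).card ≤ 2 * k := by
  subst hKeq
  have hsub : ((Finset.range (k * (c*k+d))).filter (fun x =>
        1 < ((blockPsi k c d ((x + 1) % (k * (c*k+d))) : ℤ)
              - (blockPsi k c d x : ℤ)).natAbs))
      ⊆ (Finset.range (k * (c*k+d))).filter
          (fun x => x % (c*k+d) = c*k - 1 ∨ x % (c*k+d) = (c*k+d) - 1) := by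
    intro x hx
    simp only [Finset.mem_filter, Finset.mem_range] at hx ⊢
    refine ⟨hx.1, ?_⟩
    by_contra hc
    push_neg at hc
    obtain ⟨hc1, hc2⟩ := hc
    have hb : x % (c*k+d) < c*k+d := Nat.mod_lt _ hK
    have hb1 : x % (c*k+d) + 1 < c*k+d := by omega
    have h1' : x % (c*k+d) + 1 ≠ c*k := by
      intro h; apply hc1; omega
    have hx1 : x + 1 < k * (c*k+d) := by
      rcases Nat.lt_or_ge (x+1) (k*(c*k+d)) with h | h
      · exact h
      · exfalso
        have hx1eq : x + 1 = k * (c*k+d) := by omega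
        have hm0 : (x+1) % (c*k+d) = 0 := by
          rw [hx1eq]; exact Nat.mul_mod_left k (c*k+d)
        have hxe := Nat.div_add_mod x (c*k+d)
        have hm1 : (x+1) % (c*k+d) = x % (c*k+d) + 1 := by
          rw [show x + 1 = (x % (c*k+d) + 1) + (c*k+d) * (x/(c*k+d)) by omega,
              Nat.add_mul_mod_self_left, Nat.mod_eq_of_lt hb1]
        omega
    have h2 : (x + 1) % (k * (c*k+d)) = x + 1 := Nat.mod_eq_of_lt hx1
    have hps := psi_succ k c d hk hd x h1' hb1
    rw [h2, hps] at hx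
    have := hx.2
    push_cast at this
    omega
  calc ((Finset.range (k * (c*k+d))).filter _).card
      ≤ ((Finset.range (k * (c*k+d))).filter
          (fun x => x % (c*k+d) = c*k - 1 ∨ x % (c*k+d) = (c*k+d) - 1)).card :=
        Finset.card_le_card hsub
    _ ≤ _ := by
        rw [Finset.filter_or]
        refine le_trans (Finset.card_union_le _ _) ?_
        have h1 := card_mod_le k (c*k+d) (c*k-1) hK
        have h2 := card_mod_le k (c*k+d) ((c*k+d)-1) hK
        omega
end

section
/- Let ω : ℕ → ℝ≥0 be non-decreasing and sublinear, i.e., ω(n)/n → 0 as n → ∞. Then for every δ > 0, there exists a strictly increasing sequence of positive integers (k_n)_{n≥0} with k_0 = 1 and k_n | k_{n+2} for all n, such that Σ_{n≥0} (k_{n−1} k_n / k_{n+1})·ω(k_n) < δ and Σ_{n≥1} (2/k_n)·ω(k_{n−1} k_n) < δ (with the convention k_{−1} = 1). -/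
open scoped NNReal
open Filter

lemma key_choice (ω : ℕ → ℝ≥0)
    (hsub : Filter.Tendsto (fun n => (ω n : ℝ) / n) Filter.atTop (nhds 0))
    (a b : ℕ) (ha : 0 < a) (hb : 0 < b) (ε : ℝ≥0) (hε : 0 < ε) :
    ∃ c : ℕ, a ∣ c ∧ b < c ∧ ((a : ℝ≥0) * b / c) * ω b ≤ ε
      ∧ (2 / (c : ℝ≥0)) * ω (b * c) ≤ ε := by
  have hε' : (0:ℝ) < (ε:ℝ) := hε
  have hb' : (0:ℝ) < (b:ℝ) := by exact_mod_cast hb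
  have hpos : (0:ℝ) < (ε:ℝ) / (2 * b) := by positivity
  have hev : ∀ᶠ n in atTop, (ω n : ℝ) / n < (ε:ℝ) / (2 * b) :=
    hsub.eventually (eventually_lt_nhds hpos)
  obtain ⟨N, hN⟩ := eventually_atTop.mp hev
  set T : ℕ := ⌈((a:ℝ) * b * (ω b : ℝ)) / ε⌉₊ with hT
  refine ⟨a * (N + b + T + 1), ⟨_, rfl⟩, ?_, ?_, ?_⟩
  · have : N + b + T + 1 ≤ a * (N + b + T + 1) := Nat.le_mul_of_pos_left _ ha
    omega
  · set c := a * (N + b + T + 1) with hc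
    have hc0 : 0 < c := by positivity
    have hc0' : (0:ℝ) < (c:ℝ) := by exact_mod_cast hc0
    have hTc : (T:ℝ) ≤ c := by
      exact_mod_cast Nat.le_of_lt (by
        have : N + b + T + 1 ≤ c := Nat.le_mul_of_pos_left _ ha
        omega)
    have hxT : ((a:ℝ) * b * (ω b : ℝ)) / ε ≤ T := Nat.le_ceil _
    have hx : (a:ℝ) * b * (ω b : ℝ) ≤ ε * c := by
      have := hxT.trans hTc
      rw [div_le_iff₀ hε'] at this
      nlinarith
    rw [div_mul_eq_mul_div, div_le_iff₀ (by exact_mod_cast hc0 : (0:ℝ≥0) < c)]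
    rw [← NNReal.coe_le_coe]
    push_cast
    linarith
  · set c := a * (N + b + T + 1) with hc
    have hc0 : 0 < c := by positivity
    have hc0' : (0:ℝ) < (c:ℝ) := by exact_mod_cast hc0
    have hNc : N ≤ b * c := by
      have h1 : N ≤ c := le_trans (by omega) (Nat.le_mul_of_pos_left _ ha)
      calc N ≤ c := h1
        _ ≤ b * c := Nat.le_mul_of_pos_left _ hb
    have hbc : (ω (b * c) : ℝ) / (b * c : ℕ) < (ε:ℝ) / (2 * b) := hN _ hNc
    have hbc' : (ω (b * c) : ℝ) < (ε:ℝ) * c / 2 := by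
      rw [div_lt_div_iff₀ (by positivity) (by positivity)] at hbc
      push_cast at hbc ⊢
      nlinarith
    rw [div_mul_eq_mul_div, div_le_iff₀ (by exact_mod_cast hc0 : (0:ℝ≥0) < c)]
    rw [← NNReal.coe_le_coe]
    push_cast
    linarith

/-- For every non-decreasing sublinear `ω` and `δ > 0`, there is a strictly
increasing sequence `(k_n)` of positive integers with `k 0 = 1`, `k n ∣ k (n+2)`,
making the two error series smaller than `δ` (with the convention `k_{-1} = 1`). -/
theorem stmt_10 (ω : ℕ → ℝ≥0) (hω : Monotone ω)
    (hsub : Filter.Tendsto (fun n => (ω n : ℝ) / n) Filter.atTop (nhds 0))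
    (δ : ℝ≥0) (hδ : 0 < δ) :
    ∃ k : ℕ → ℕ, k 0 = 1 ∧ StrictMono k ∧ (∀ n, 0 < k n)
      ∧ (∀ n, k n ∣ k (n + 2))
      ∧ (Summable (fun n =>
          (((if n = 0 then 1 else k (n - 1)) : ℝ≥0) * k n / k (n + 1)) * ω (k n)))
      ∧ (∑' n : ℕ,
          (((if n = 0 then 1 else k (n - 1)) : ℝ≥0) * k n / k (n + 1)) * ω (k n)) < δ
      ∧ (Summable (fun n : ℕ => (2 / (k (n + 1) : ℝ≥0)) * ω (k n * k (n + 1))))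
      ∧ (∑' n : ℕ, (2 / (k (n + 1) : ℝ≥0)) * ω (k n * k (n + 1))) < δ := by
  classical
  -- error budget
  set ε : ℕ → ℝ≥0 := fun n => δ / 2 ^ (n + 2) with hε
  have hεpos : ∀ n, 0 < ε n := fun n => by
    have : (0:ℝ≥0) < 2 ^ (n + 2) := by positivity
    exact div_pos hδ this
  have hkey : ∀ n a b, 0 < a → 0 < b → ∃ c : ℕ, a ∣ c ∧ b < c
      ∧ ((a : ℝ≥0) * b / c) * ω b ≤ ε n ∧ (2 / (c : ℝ≥0)) * ω (b * c) ≤ ε n :=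
    fun n a b ha hb => key_choice ω hsub a b ha hb (ε n) (hεpos n)
  choose! F hF1 hF2 hF3 hF4 using hkey
  -- recursive construction of pairs (k n, k (n+1))
  set f : ℕ → ℕ × ℕ :=
    fun n => Nat.rec (1, F 0 1 1) (fun m p => (p.2, F (m + 1) p.1 p.2)) n with hf
  set k : ℕ → ℕ := fun n => (f n).1 with hk
  have hsucc : ∀ n, k (n + 1) = (f n).2 := fun n => rfl
  have hpair : ∀ n, 0 < (f n).1 ∧ (f n).1 < (f n).2 := by
    intro n
    induction n with
    | zero =>
      refine ⟨one_pos, hF2 0 1 1 one_pos one_pos⟩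
    | succ m ih =>
      refine ⟨lt_trans ih.1 ih.2, hF2 (m + 1) (f m).1 (f m).2 ih.1 (lt_trans ih.1 ih.2)⟩
  have hkpos : ∀ n, 0 < k n := fun n => (hpair n).1
  have hmono : StrictMono k := by
    apply strictMono_nat_of_lt_succ
    intro n
    rw [hsucc n]
    exact (hpair n).2
  have hkval : ∀ n, k (n + 2) = F (n + 1) (k n) (k (n + 1)) := fun n => rfl
  have hk1 : k 1 = F 0 1 1 := rfl
  have hk0 : k 0 = 1 := rfl
  refine ⟨k, hk0, hmono, hkpos, ?_, ?_, ?_, ?_, ?_⟩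
  · intro n
    rw [hkval n]
    exact hF1 (n + 1) (k n) (k (n + 1)) (hkpos n) (hkpos (n + 1))
  all_goals {
    have hbound1 : ∀ n : ℕ, ((if n = 0 then (1:ℝ≥0) else (k (n - 1) : ℝ≥0)) * k n / k (n + 1))
        * ω (k n) ≤ ε n := by
      intro n
      match n with
      | 0 =>
        simp only [if_pos rfl]
        simpa [hk0, hk1] using hF3 0 1 1 one_pos one_pos
      | (m + 1) =>
        simp only [if_neg (Nat.succ_ne_zero m), Nat.add_sub_cancel]
        rw [hkval m]
        exact hF3 (m + 1) (k m) (k (m + 1)) (hkpos m) (hkpos (m + 1))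
    have hbound2 : ∀ n, (2 / (k (n + 1) : ℝ≥0)) * ω (k n * k (n + 1)) ≤ ε n := by
      intro n
      match n with
      | 0 =>
        exact hF4 0 1 1 one_pos one_pos
      | (m + 1) =>
        rw [hkval m]
        exact hF4 (m + 1) (k m) (k (m + 1)) (hkpos m) (hkpos (m + 1))
    have hhalf : (2⁻¹ : ℝ≥0) < 1 := by rw [← NNReal.coe_lt_coe]; norm_num
    have h1 : ε = fun n => (δ / 4) * (2⁻¹ : ℝ≥0) ^ n := by
      funext n
      show δ / 2 ^ (n + 2) = δ / 4 * 2⁻¹ ^ n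
      apply NNReal.coe_injective
      push_cast
      have h2 : ((2:ℝ)) ^ (n + 2) ≠ 0 := by positivity
      have h2' : ((2:ℝ)) ^ n ≠ 0 := by positivity
      rw [inv_pow]
      field_simp
      ring
    have hgeo : Summable ε := by
      rw [h1]
      exact (NNReal.summable_geometric hhalf).mul_left _
    have hgeosum : ∑' n, ε n < δ := by
      rw [h1, NNReal.tsum_mul_left, tsum_geometric_nnreal hhalf]
      have : (δ / 4) * ((1 : ℝ≥0) - 2⁻¹)⁻¹ = δ / 2 := by
        rw [show ((1:ℝ≥0) - 2⁻¹) = 2⁻¹ by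
          rw [← NNReal.coe_inj]; push_cast [NNReal.coe_sub hhalf.le]; norm_num]
        rw [← NNReal.coe_inj]
        push_cast
        ring
      rw [this]
      exact NNReal.half_lt_self hδ.ne'
    first
    | exact NNReal.summable_of_le hbound1 hgeo
    | exact lt_of_le_of_lt (Summable.tsum_le_tsum hbound1 (NNReal.summable_of_le hbound1 hgeo) hgeo) hgeosum
    | exact NNReal.summable_of_le hbound2 hgeo
    | exact lt_of_le_of_lt (Summable.tsum_le_tsum hbound2 (NNReal.summable_of_le hbound2 hgeo) hgeo) hgeosum
  }
end

section
/- Given two divisibility-increasing sequences (a_n) (with a_n | a_{n+1}) and (b_n) (with b_n | b_{n+1}) of positive integers, both tending to infinity, and any function F : ℕ × ℕ → ℕ, there exists a strictly increasing sequence (k_n)_{n≥1} of positive integers such that: k_n | k_{n+2} for all n; k_{n+1} > F(k_{n-1}, k_n) for all n (with k_0 = 1); the odd subsequence (k_{2n+1}) has the same supernatural number as (a_n); and the even subsequence (k_{2n}) has the same supernatural number as (b_n). -/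
open scoped ENat

/-- Interleaving lemma: given two divisibility-increasing sequences tending to
infinity and an arbitrary growth prescription `F`, there is a single strictly
increasing sequence `(k_n)` with `k 0 = 1`, `k n ∣ k (n+2)`,
`k (n+1) > F (k (n-1)) (k n)`, whose odd subsequence has the supernatural
number of `(a_n)` and whose even subsequence has the supernatural number of
`(b_n)`. -/
theorem stmt_16 (a b : ℕ → ℕ) (ha : ∀ n, 0 < a n) (hb : ∀ n, 0 < b n)
    (hadiv : ∀ n, a n ∣ a (n + 1)) (hbdiv : ∀ n, b n ∣ b (n + 1))
    (hatop : Filter.Tendsto a Filter.atTop Filter.atTop)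
    (hbtop : Filter.Tendsto b Filter.atTop Filter.atTop)
    (F : ℕ → ℕ → ℕ) :
    ∃ k : ℕ → ℕ, k 0 = 1 ∧ (∀ n, 0 < k n) ∧ StrictMono k
      ∧ (∀ n, k n ∣ k (n + 2))
      ∧ (∀ n, F (k (n - 1)) (k n) < k (n + 1))
      ∧ (∀ q : ℕ, q.Prime →
          (⨆ n, ((k (2 * n + 1)).factorization q : ℕ∞))
            = ⨆ n, ((a n).factorization q : ℕ∞))
      ∧ (∀ q : ℕ, q.Prime →
          (⨆ n, ((k (2 * n)).factorization q : ℕ∞))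
            = ⨆ n, ((b n).factorization q : ℕ∞)) := by
  classical
  -- existence of large indices
  have hex : ∀ (c : ℕ → ℕ), Filter.Tendsto c Filter.atTop Filter.atTop →
      ∀ L M : ℕ, ∃ j, L ≤ j ∧ M < c j := by
    intro c hc L M
    obtain ⟨N, hN⟩ := Filter.eventually_atTop.mp
      (Filter.tendsto_atTop.mp hc (M + 1))
    exact ⟨max L N, le_max_left _ _, hN _ (le_max_right _ _)⟩
  choose fa hfaL hfaM using hex a hatop
  choose fb hfbL hfbM using hex b hbtop
  -- divisibility chains
  have hchain : ∀ (c : ℕ → ℕ), (∀ n, c n ∣ c (n + 1)) →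
      ∀ i j, i ≤ j → c i ∣ c j := by
    intro c hc i j h
    induction j, h using Nat.le_induction with
    | base => exact dvd_refl _
    | succ j hj ih => exact ih.trans (hc j)
  -- the recursive construction: state is ((k(2n), index for b), (k(2n+1), index for a))
  set g : ℕ → (ℕ × ℕ) × (ℕ × ℕ) := fun n => Nat.rec
    ((1, 0), (a (fa 0 (max 1 (F 1 1))), fa 0 (max 1 (F 1 1))))
    (fun n p =>
      ((b (fb (max p.1.2 (n + 1)) (max p.2.1 (F p.1.1 p.2.1))),
        fb (max p.1.2 (n + 1)) (max p.2.1 (F p.1.1 p.2.1))),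
       (a (fa (max p.2.2 (n + 1))
            (max (b (fb (max p.1.2 (n + 1)) (max p.2.1 (F p.1.1 p.2.1))))
              (F p.2.1 (b (fb (max p.1.2 (n + 1)) (max p.2.1 (F p.1.1 p.2.1))))))),
        fa (max p.2.2 (n + 1))
            (max (b (fb (max p.1.2 (n + 1)) (max p.2.1 (F p.1.1 p.2.1))))
              (F p.2.1 (b (fb (max p.1.2 (n + 1)) (max p.2.1 (F p.1.1 p.2.1))))))))) n
    with hg
  -- step equalities (all definitional)
  have hg0 : (g 0).1.1 = 1 := rfl
  have hbval : ∀ n, (g (n + 1)).1.1 = b ((g (n + 1)).1.2) := fun n => rfl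
  have haval : ∀ n, (g n).2.1 = a ((g n).2.2) := by
    intro n; cases n <;> rfl
  have hibL : ∀ n, max (g n).1.2 (n + 1) ≤ (g (n + 1)).1.2 := fun n =>
    hfbL _ _
  have hibM : ∀ n, max (g n).2.1 (F (g n).1.1 (g n).2.1) < (g (n + 1)).1.1 :=
    fun n => hfbM _ _
  have hiaL : ∀ n, max (g n).2.2 (n + 1) ≤ (g (n + 1)).2.2 := fun n =>
    hfaL _ _
  have hiaM : ∀ n, max ((g (n + 1)).1.1) (F ((g n).2.1) ((g (n + 1)).1.1))
      < (g (n + 1)).2.1 := fun n => hfaM _ _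
  have hka0 : max 1 (F 1 1) < (g 0).2.1 := hfaM _ _
  -- derived inequalities
  have hlt1 : ∀ n, (g n).1.1 < (g n).2.1 := by
    intro n
    cases n with
    | zero => exact lt_of_le_of_lt (le_max_left _ _) hka0
    | succ n => exact lt_of_le_of_lt (le_max_left _ _) (hiaM n)
  have hlt2 : ∀ n, (g n).2.1 < (g (n + 1)).1.1 := fun n =>
    lt_of_le_of_lt (le_max_left _ _) (hibM n)
  have hia_ge : ∀ n, n ≤ (g n).2.2 := by
    intro n
    cases n with
    | zero => exact Nat.zero_le _
    | succ n => exact le_trans (le_max_right _ _) (hiaL n)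
  have hib_ge : ∀ n, n + 1 ≤ (g (n + 1)).1.2 := fun n =>
    le_trans (le_max_right _ _) (hibL n)
  have hia_mono : ∀ n, (g n).2.2 ≤ (g (n + 1)).2.2 := fun n =>
    le_trans (le_max_left _ _) (hiaL n)
  have hib_mono : ∀ n, (g n).1.2 ≤ (g (n + 1)).1.2 := fun n =>
    le_trans (le_max_left _ _) (hibL n)
  -- the sequence k
  set k : ℕ → ℕ := fun m => if m % 2 = 0 then (g (m / 2)).1.1 else (g (m / 2)).2.1
    with hk
  have hkE : ∀ t, k (2 * t) = (g t).1.1 := by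
    intro t
    have h1 : (2 * t) % 2 = 0 := by omega
    have h2 : (2 * t) / 2 = t := by omega
    simp [hk, h1, h2]
  have hkO : ∀ t, k (2 * t + 1) = (g t).2.1 := by
    intro t
    have h1 : (2 * t + 1) % 2 = 1 := by omega
    have h2 : (2 * t + 1) / 2 = t := by omega
    simp [hk, h1, h2]
  have hk0 : k 0 = 1 := hkE 0
  -- positivity
  have hpos : ∀ n, 0 < k n := by
    intro n
    rcases Nat.even_or_odd n with ⟨t, ht⟩ | ⟨t, ht⟩
    · have hn : n = 2 * t := by omega
      rw [hn, hkE]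
      cases t with
      | zero => norm_num [hg0]
      | succ t => rw [hbval]; exact hb _
    · have hn : n = 2 * t + 1 := by omega
      rw [hn, hkO, haval]; exact ha _
  -- strict monotonicity
  have hSM : StrictMono k := by
    apply strictMono_nat_of_lt_succ
    intro m
    rcases Nat.even_or_odd m with ⟨t, ht⟩ | ⟨t, ht⟩
    · have hm : m = 2 * t := by omega
      rw [hm, hkE, show 2 * t + 1 = 2 * t + 1 from rfl, hkO]
      exact hlt1 t
    · have hm : m = 2 * t + 1 := by omega
      rw [hm, hkO, show 2 * t + 1 + 1 = 2 * (t + 1) by ring, hkE]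
      exact hlt2 t
  -- factorization monotonicity helper
  have hmono : ∀ (m n : ℕ), 0 < m → 0 < n → m ∣ n →
      ∀ q, m.factorization q ≤ n.factorization q := by
    intro m n hm hn hd q
    exact (Nat.factorization_le_iff_dvd hm.ne' hn.ne').mpr hd q
  refine ⟨k, hk0, hpos, hSM, ?_, ?_, ?_, ?_⟩
  · -- divisibility k n ∣ k (n+2)
    intro n
    rcases Nat.even_or_odd n with ⟨t, ht⟩ | ⟨t, ht⟩
    · have hn : n = 2 * t := by omega
      rw [hn, hkE, show 2 * t + 2 = 2 * (t + 1) by ring, hkE]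
      cases t with
      | zero => rw [hg0]; exact one_dvd _
      | succ t =>
        rw [hbval t, hbval (t + 1)]
        exact hchain b hbdiv _ _ (hib_mono (t + 1))
    · have hn : n = 2 * t + 1 := by omega
      rw [hn, hkO, show 2 * t + 1 + 2 = 2 * (t + 1) + 1 by ring, hkO,
        haval t, haval (t + 1)]
      exact hchain a hadiv _ _ (hia_mono t)
  · -- growth condition
    intro n
    match n with
    | 0 =>
      rw [show (0 : ℕ) - 1 = 0 from rfl, hk0, show (0 : ℕ) + 1 = 2 * 0 + 1 by ring, hkO]
      exact lt_of_le_of_lt (le_max_right _ _) hka0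
    | 1 =>
      rw [show (1 : ℕ) - 1 = 0 from rfl, hk0, show (1 : ℕ) = 2 * 0 + 1 by ring, hkO,
        show (2 * 0 + 1) + 1 = 2 * (0 + 1) by ring, hkE, ← hg0]
      exact lt_of_le_of_lt (le_max_right _ _) (hibM 0)
    | (m + 2) =>
      rcases Nat.even_or_odd m with ⟨t, ht⟩ | ⟨t, ht⟩
      · -- m + 2 = 2(t+1), so index is even
        have h1 : m + 2 - 1 = 2 * t + 1 := by omega
        have h2 : m + 2 = 2 * (t + 1) := by omega
        rw [h1, hkO, h2, hkE, hkO (t + 1)]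
        exact lt_of_le_of_lt (le_max_right _ _) (hiaM t)
      · -- m + 2 = 2(t+1)+1, odd index
        have h1 : m + 2 - 1 = 2 * (t + 1) := by omega
        have h2 : m + 2 = 2 * (t + 1) + 1 := by omega
        rw [h1, hkE, h2, hkO, show 2 * (t + 1) + 1 + 1 = 2 * (t + 2) by ring,
          hkE (t + 2)]
        exact lt_of_le_of_lt (le_max_right _ _) (hibM (t + 1))
  · -- odd supernatural number = that of a
    intro q hq
    apply le_antisymm
    · refine iSup_le fun n => ?_
      rw [hkO n, haval n]
      exact le_iSup (fun m => ((a m).factorization q : ℕ∞)) ((g n).2.2)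
    · refine iSup_le fun n => ?_
      have h1 : (a n).factorization q ≤ (a ((g n).2.2)).factorization q :=
        hmono _ _ (ha n) (ha _) (hchain a hadiv _ _ (hia_ge n)) q
      calc ((a n).factorization q : ℕ∞)
          ≤ ((a ((g n).2.2)).factorization q : ℕ∞) := by exact_mod_cast h1
        _ = ((k (2 * n + 1)).factorization q : ℕ∞) := by rw [hkO n, haval n]
        _ ≤ ⨆ m, ((k (2 * m + 1)).factorization q : ℕ∞) :=
            le_iSup (fun m => ((k (2 * m + 1)).factorization q : ℕ∞)) n
  · -- even supernatural number = that of b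
    intro q hq
    apply le_antisymm
    · refine iSup_le fun n => ?_
      cases n with
      | zero =>
        rw [show 2 * 0 = 0 from rfl, hk0]
        simp
      | succ n =>
        rw [hkE (n + 1), hbval n]
        exact le_iSup (fun m => ((b m).factorization q : ℕ∞)) ((g (n + 1)).1.2)
    · refine iSup_le fun n => ?_
      have hle : n ≤ (g (n + 1)).1.2 := le_trans (Nat.le_succ n) (hib_ge n)
      have h1 : (b n).factorization q ≤ (b ((g (n + 1)).1.2)).factorization q :=
        hmono _ _ (hb n) (hb _) (hchain b hbdiv _ _ hle) q
      calc ((b n).factorization q : ℕ∞)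
          ≤ ((b ((g (n + 1)).1.2)).factorization q : ℕ∞) := by exact_mod_cast h1
        _ = ((k (2 * (n + 1))).factorization q : ℕ∞) := by rw [hkE (n + 1), hbval n]
        _ ≤ ⨆ m, ((k (2 * m)).factorization q : ℕ∞) :=
            le_iSup (fun m => ((k (2 * m)).factorization q : ℕ∞)) (n + 1)
end
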